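/- Fix an integer d ≥ 0 and complex numbers t, Q with t ≠ 0, t not a root of unity, Q ≠ 0, and Q ∉ {t^k : k ∈ ℤ}. Then, as q → 0 (through complex values where the expression is defined), Σ_{(λ,μ) partitions, |λ|+|μ| = d} (t/q)^{2d} / [ N_{λλ}(1; q, t) · N_{λμ}(Q; q, t) · N_{μμ}(1; q, t) · N_{μλ}(Q^{−1}; q, t) ] tends to Σ_{(n,m): n,m ≥ 0, n+m = d} 1 / [ ∏_{s=1}^{n}(1 − t^{−s})(1 − Q^{−1} t^{n−m−s}) · ∏_{s=1}^{m}(1 − t^{−s})(1 − Q t^{m−n−s}) ]. -/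

import Mathlib

open Finset Filter Topology

/-- `i`-th part (1-indexed) of a partition given as a list of parts; `0` beyond the length. -/
def partAt (L : List ℕ) (i : ℕ) : ℕ := L.getD (i - 1) 0

/-- `j`-th part (1-indexed) of the conjugate partition: `#{i : λ_i ≥ j}`. -/
def conjAt (L : List ℕ) (j : ℕ) : ℕ := (L.filter (fun x => j ≤ x)).length

/-- Arm length `A_λ(i,j) = λ_i − j` (cells are 1-indexed; may be negative). -/
def armA (L : List ℕ) (i j : ℕ) : ℤ := (partAt L i : ℤ) - (j : ℤ)

/-- Leg length `L_λ(i,j) = λ′_j − i` (cells are 1-indexed; may be negative). -/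
def legA (L : List ℕ) (i j : ℕ) : ℤ := (conjAt L j : ℤ) - (i : ℤ)

/-- The 5D Nekrasov factor
`N_{λμ}(Q; q, t) = ∏_{(i,j)∈λ} (1 − Q q^{A_λ(i,j)} t^{L_μ(i,j)+1})
  · ∏_{(i,j)∈μ} (1 − Q q^{−A_μ(i,j)−1} t^{−L_λ(i,j)})`,
with the product over cells written as a double product. -/
noncomputable def nekrasov (q t Q : ℂ) (lam mu : List ℕ) : ℂ :=
  (∏ i ∈ Finset.Icc 1 lam.length, ∏ j ∈ Finset.Icc 1 (partAt lam i),
      (1 - Q * q ^ armA lam i j * t ^ (legA mu i j + 1))) *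
    ∏ i ∈ Finset.Icc 1 mu.length, ∏ j ∈ Finset.Icc 1 (partAt mu i),
      (1 - Q * q ^ (-armA mu i j - 1) * t ^ (-legA lam i j))

/-- The weakly decreasing list of parts of a partition of `k`. -/
def plist {k : ℕ} (P : Nat.Partition k) : List ℕ := (P.parts.sort (· ≤ ·)).reverse

/-- regularized second-product-cleared nekrasov factor, polynomial in `q`. -/
noncomputable def nekReg (q t Q : ℂ) (lam mu : List ℕ) : ℂ :=
  (∏ i ∈ Finset.Icc 1 lam.length, ∏ j ∈ Finset.Icc 1 (partAt lam i),
      (1 - Q * q ^ (partAt lam i - j) * t ^ (legA mu i j + 1))) *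
    ∏ i ∈ Finset.Icc 1 mu.length, ∏ j ∈ Finset.Icc 1 (partAt mu i),
      (q ^ (partAt mu i - j + 1) - Q * t ^ (-legA lam i j))

/-- total pole order of a nekrasov second product. -/
def n2 (L : List ℕ) : ℕ :=
  ∑ i ∈ Finset.Icc 1 L.length, ∑ j ∈ Finset.Icc 1 (partAt L i), (partAt L i - j + 1)

lemma nekrasov_eq_nekReg (q t Q : ℂ) (hq : q ≠ 0) (lam mu : List ℕ) :
    nekrasov q t Q lam mu = (q ^ n2 mu)⁻¹ * nekReg q t Q lam mu := by
  unfold nekrasov nekReg n2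
  rw [mul_comm ((q ^ _)⁻¹) _, mul_assoc]
  congr 1
  · refine Finset.prod_congr rfl fun i hi => Finset.prod_congr rfl fun j hj => ?_
    have hj' : j ≤ partAt lam i := (Finset.mem_Icc.mp hj).2
    have : armA lam i j = ((partAt lam i - j : ℕ) : ℤ) := by
      unfold armA; omega
    rw [this, zpow_natCast]
  · rw [← Finset.prod_pow_eq_pow_sum, ← Finset.prod_inv_distrib, ← Finset.prod_mul_distrib]
    refine Finset.prod_congr rfl fun i hi => ?_
    rw [← Finset.prod_pow_eq_pow_sum, ← Finset.prod_inv_distrib, ← Finset.prod_mul_distrib]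
    refine Finset.prod_congr rfl fun j hj => ?_
    have hj' : j ≤ partAt mu i := (Finset.mem_Icc.mp hj).2
    have he : -armA mu i j - 1 = -((partAt mu i - j + 1 : ℕ) : ℤ) := by unfold armA; omega
    have hqe : (q : ℂ) ^ (partAt mu i - j + 1) ≠ 0 := pow_ne_zero _ hq
    rw [he, zpow_neg, zpow_natCast, sub_mul, mul_inv_cancel₀ hqe]
    ring


lemma continuous_nekReg (t Q : ℂ) (lam mu : List ℕ) :
    Continuous fun q : ℂ => nekReg q t Q lam mu := by
  unfold nekReg; fun_prop

lemma partAt_replicate (n i : ℕ) (hi : i ∈ Finset.Icc 1 n) :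
    partAt (List.replicate n (1:ℕ)) i = 1 := by
  rw [Finset.mem_Icc] at hi
  unfold partAt
  rw [List.getD_eq_getElem?_getD, List.getElem?_replicate]
  have : i - 1 < n := by omega
  simp [this]

lemma conjAt_replicate_one (m : ℕ) : conjAt (List.replicate m (1:ℕ)) 1 = m := by
  unfold conjAt
  rw [List.filter_eq_self.mpr]
  · simp
  · intro a ha
    have := List.eq_of_mem_replicate ha
    simp [this]

lemma nekReg_zero_replicate (t Q : ℂ) (n m : ℕ) :
    nekReg 0 t Q (List.replicate n 1) (List.replicate m 1) =
      (∏ i ∈ Finset.Icc 1 n, (1 - Q * t ^ ((m:ℤ) - i + 1))) *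
        ∏ i ∈ Finset.Icc 1 m, (-(Q * t ^ ((i:ℤ) - (n:ℤ)))) := by
  unfold nekReg
  rw [List.length_replicate, List.length_replicate]
  congr 1
  · refine Finset.prod_congr rfl fun i hi => ?_
    rw [partAt_replicate n i hi, Finset.Icc_self, Finset.prod_singleton]
    have hleg : legA (List.replicate m 1) i 1 + 1 = (m:ℤ) - i + 1 := by
      unfold legA; rw [conjAt_replicate_one]
    simp [hleg]
  · refine Finset.prod_congr rfl fun i hi => ?_
    rw [partAt_replicate m i hi, Finset.Icc_self, Finset.prod_singleton]
    have hleg : -legA (List.replicate n 1) i 1 = (i:ℤ) - (n:ℤ) := by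
      unfold legA; rw [conjAt_replicate_one]; ring
    rw [hleg]
    norm_num

lemma key_factor (t Q : ℂ) (ht : t ≠ 0) (hQ : Q ≠ 0) (a : ℤ) :
    (1 - Q * t ^ a) * (-(Q⁻¹ * t ^ (1 - a))) = t * (1 - Q⁻¹ * t ^ (-a)) := by
  have h1 : t ^ (1 - a) = t * t ^ (-a) := by
    rw [sub_eq_add_neg, zpow_add₀ ht, zpow_one]
  have h2 : t ^ a * t ^ (-a) = 1 := by
    rw [← zpow_add₀ ht]; simp
  have h3 : Q * Q⁻¹ = 1 := mul_inv_cancel₀ hQ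
  rw [h1]
  linear_combination (Q * Q⁻¹ * t) * h2 + t * h3

lemma pairProd (t Q : ℂ) (ht : t ≠ 0) (hQ : Q ≠ 0) (n m : ℕ) :
    (∏ i ∈ Finset.Icc 1 n, (1 - Q * t ^ ((m:ℤ) - i + 1))) *
      (∏ i ∈ Finset.Icc 1 n, (-(Q⁻¹ * t ^ ((i:ℤ) - (m:ℤ))))) =
    t ^ n * ∏ s ∈ Finset.Icc 1 n, (1 - Q⁻¹ * t ^ ((n:ℤ) - (m:ℤ) - s)) := by
  rw [← Finset.prod_mul_distrib]
  have hconst : (t:ℂ) ^ n = ∏ _s ∈ Finset.Icc 1 n, t := by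
    rw [Finset.prod_const, Nat.card_Icc]; simp
  rw [hconst, ← Finset.prod_mul_distrib]
  refine Finset.prod_nbij' (fun i => n + 1 - i) (fun s => n + 1 - s) ?_ ?_ ?_ ?_ ?_
  · intro i hi; simp only [Finset.mem_Icc] at hi ⊢; omega
  · intro s hs; simp only [Finset.mem_Icc] at hs ⊢; omega
  · intro i hi; simp only [Finset.mem_Icc] at hi; show n + 1 - (n + 1 - i) = i; omega
  · intro s hs; simp only [Finset.mem_Icc] at hs; show n + 1 - (n + 1 - s) = s; omega
  · intro i hi
    rw [Finset.mem_Icc] at hi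
    have hc : ((n + 1 - i : ℕ) : ℤ) = (n:ℤ) + 1 - i := by omega
    have he1 : (m:ℤ) - i + 1 = (m:ℤ) - i + 1 := rfl
    have he2 : (n:ℤ) - m - ((n:ℤ) + 1 - i) = -((m:ℤ) - i + 1) := by ring
    have he3 : (i:ℤ) - m = 1 - ((m:ℤ) - i + 1) := by ring
    rw [hc, he2, he3]
    exact key_factor t Q ht hQ ((m:ℤ) - i + 1)

lemma column_R0 (t Q : ℂ) (ht : t ≠ 0) (hQ : Q ≠ 0) (n m : ℕ) :
    nekReg 0 t 1 (List.replicate n 1) (List.replicate n 1) *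
      nekReg 0 t Q (List.replicate n 1) (List.replicate m 1) *
      nekReg 0 t 1 (List.replicate m 1) (List.replicate m 1) *
      nekReg 0 t Q⁻¹ (List.replicate m 1) (List.replicate n 1) =
    t ^ (2 * (n + m)) *
      ((∏ s ∈ Finset.Icc 1 n,
          ((1 - t ^ (-(s : ℤ))) * (1 - Q⁻¹ * t ^ ((n : ℤ) - (m : ℤ) - (s : ℤ))))) *
        ∏ s ∈ Finset.Icc 1 m,
          ((1 - t ^ (-(s : ℤ))) * (1 - Q * t ^ ((m : ℤ) - (n : ℤ) - (s : ℤ))))) := by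
  have hA : (∏ i ∈ Finset.Icc 1 n, (1 - (1:ℂ) * t ^ ((n:ℤ) - i + 1))) *
      (∏ i ∈ Finset.Icc 1 n, (-((1:ℂ) * t ^ ((i:ℤ) - (n:ℤ))))) =
      t ^ n * ∏ s ∈ Finset.Icc 1 n, (1 - t ^ (-(s:ℤ))) := by
    have h := pairProd t 1 ht one_ne_zero n n
    simp only [inv_one, one_mul] at h ⊢
    rw [h]
    congr 1
    refine Finset.prod_congr rfl fun s _ => ?_
    rw [show (n:ℤ) - n - s = -(s:ℤ) by ring]
  have hC : (∏ i ∈ Finset.Icc 1 m, (1 - (1:ℂ) * t ^ ((m:ℤ) - i + 1))) *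
      (∏ i ∈ Finset.Icc 1 m, (-((1:ℂ) * t ^ ((i:ℤ) - (m:ℤ))))) =
      t ^ m * ∏ s ∈ Finset.Icc 1 m, (1 - t ^ (-(s:ℤ))) := by
    have h := pairProd t 1 ht one_ne_zero m m
    simp only [inv_one, one_mul] at h ⊢
    rw [h]
    congr 1
    refine Finset.prod_congr rfl fun s _ => ?_
    rw [show (m:ℤ) - m - s = -(s:ℤ) by ring]
  have hB : (∏ i ∈ Finset.Icc 1 n, (1 - Q * t ^ ((m:ℤ) - i + 1))) *
      (∏ i ∈ Finset.Icc 1 n, (-(Q⁻¹ * t ^ ((i:ℤ) - (m:ℤ))))) =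
      t ^ n * ∏ s ∈ Finset.Icc 1 n, (1 - Q⁻¹ * t ^ ((n:ℤ) - (m:ℤ) - s)) :=
    pairProd t Q ht hQ n m
  have hD : (∏ i ∈ Finset.Icc 1 m, (1 - Q⁻¹ * t ^ ((n:ℤ) - i + 1))) *
      (∏ i ∈ Finset.Icc 1 m, (-(Q * t ^ ((i:ℤ) - (n:ℤ))))) =
      t ^ m * ∏ s ∈ Finset.Icc 1 m, (1 - Q * t ^ ((m:ℤ) - (n:ℤ) - s)) := by
    have h := pairProd t Q⁻¹ ht (inv_ne_zero hQ) m n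
    simpa [inv_inv] using h
  rw [nekReg_zero_replicate, nekReg_zero_replicate, nekReg_zero_replicate,
    nekReg_zero_replicate]
  rw [Finset.prod_mul_distrib, Finset.prod_mul_distrib]
  calc
    (∏ i ∈ Finset.Icc 1 n, (1 - (1:ℂ) * t ^ ((n:ℤ) - i + 1))) *
        (∏ i ∈ Finset.Icc 1 n, (-((1:ℂ) * t ^ ((i:ℤ) - (n:ℤ))))) *
        ((∏ i ∈ Finset.Icc 1 n, (1 - Q * t ^ ((m:ℤ) - i + 1))) *
          (∏ i ∈ Finset.Icc 1 m, (-(Q * t ^ ((i:ℤ) - (n:ℤ)))))) *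
        ((∏ i ∈ Finset.Icc 1 m, (1 - (1:ℂ) * t ^ ((m:ℤ) - i + 1))) *
          (∏ i ∈ Finset.Icc 1 m, (-((1:ℂ) * t ^ ((i:ℤ) - (m:ℤ)))))) *
        ((∏ i ∈ Finset.Icc 1 m, (1 - Q⁻¹ * t ^ ((n:ℤ) - i + 1))) *
          (∏ i ∈ Finset.Icc 1 n, (-(Q⁻¹ * t ^ ((i:ℤ) - (m:ℤ))))))
      = ((∏ i ∈ Finset.Icc 1 n, (1 - (1:ℂ) * t ^ ((n:ℤ) - i + 1))) *
          (∏ i ∈ Finset.Icc 1 n, (-((1:ℂ) * t ^ ((i:ℤ) - (n:ℤ)))))) *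
        (((∏ i ∈ Finset.Icc 1 n, (1 - Q * t ^ ((m:ℤ) - i + 1))) *
          (∏ i ∈ Finset.Icc 1 n, (-(Q⁻¹ * t ^ ((i:ℤ) - (m:ℤ)))))) *
        (((∏ i ∈ Finset.Icc 1 m, (1 - (1:ℂ) * t ^ ((m:ℤ) - i + 1))) *
          (∏ i ∈ Finset.Icc 1 m, (-((1:ℂ) * t ^ ((i:ℤ) - (m:ℤ)))))) *
        ((∏ i ∈ Finset.Icc 1 m, (1 - Q⁻¹ * t ^ ((n:ℤ) - i + 1))) *
          (∏ i ∈ Finset.Icc 1 m, (-(Q * t ^ ((i:ℤ) - (n:ℤ)))))))) := by ring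
    _ = (t ^ n * ∏ s ∈ Finset.Icc 1 n, (1 - t ^ (-(s:ℤ)))) *
        ((t ^ n * ∏ s ∈ Finset.Icc 1 n, (1 - Q⁻¹ * t ^ ((n:ℤ) - (m:ℤ) - s))) *
        ((t ^ m * ∏ s ∈ Finset.Icc 1 m, (1 - t ^ (-(s:ℤ)))) *
        (t ^ m * ∏ s ∈ Finset.Icc 1 m, (1 - Q * t ^ ((m:ℤ) - (n:ℤ) - s))))) := by
      rw [hA, hB, hC, hD]
    _ = _ := by
      rw [show 2 * (n + m) = n + n + m + m by ring, pow_add, pow_add, pow_add]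
      ring

lemma le_conjAt (L : List ℕ) (hs : List.Pairwise (· ≥ ·) L) {i : ℕ} (h1 : 1 ≤ i)
    (h2 : i ≤ L.length) : i ≤ conjAt L (partAt L i) := by
  unfold conjAt partAt
  have hlt : i - 1 < L.length := by omega
  rw [List.getD_eq_getElem L 0 hlt]
  have hall : ∀ x ∈ L.take i, decide (L[i-1] ≤ x) = true := by
    intro x hx
    rw [List.mem_iff_getElem] at hx
    obtain ⟨a, ha, rfl⟩ := hx
    have hlen : a < i := by
      have := ha; simp only [List.length_take] at this; omega
    rw [List.getElem_take]
    simp only [decide_eq_true_eq]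
    rcases Nat.lt_or_ge a (i - 1) with h | h
    · exact (List.pairwise_iff_getElem.mp hs) a (i-1) _ _ h
    · have : a = i - 1 := by omega
      subst this; exact le_refl _
  have heq : (L.take i).filter (fun x => decide (L[i-1] ≤ x)) = L.take i :=
    List.filter_eq_self.mpr hall
  have hsub : ((L.take i).filter (fun x => decide (L[i-1] ≤ x))).Sublist
      (L.filter (fun x => decide (L[i-1] ≤ x))) := (List.take_sublist i L).filter _
  have := hsub.length_le
  rw [heq] at this
  simpa [List.length_take, min_eq_left h2] using this

lemma nekReg_zero_self_ne (t : ℂ) (ht : t ≠ 0) (htru : ∀ n : ℕ, 0 < n → t ^ n ≠ 1)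
    (lam : List ℕ) (hs : List.Pairwise (· ≥ ·) lam) : nekReg 0 t 1 lam lam ≠ 0 := by
  unfold nekReg
  apply mul_ne_zero
  · rw [Finset.prod_ne_zero_iff]
    intro i hi
    rw [Finset.prod_ne_zero_iff]
    intro j hj
    rw [Finset.mem_Icc] at hi hj
    rcases Nat.lt_or_ge j (partAt lam i) with h | h
    · rw [zero_pow (by omega : partAt lam i - j ≠ 0)]
      norm_num
    · have hje : j = partAt lam i := by omega
      have h0 : partAt lam i - j = 0 := by omega
      rw [h0, pow_zero]
      have hle : (i : ℤ) ≤ (conjAt lam j : ℤ) := by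
        have := le_conjAt lam hs hi.1 hi.2
        rw [hje]; exact_mod_cast this
      have hpos : 0 < legA lam i j + 1 := by unfold legA; omega
      have hz : t ^ (legA lam i j + 1) = t ^ (legA lam i j + 1).toNat := by
        rw [← zpow_natCast, Int.toNat_of_nonneg (by omega)]
      rw [hz]
      have := htru (legA lam i j + 1).toNat (by omega)
      intro hcon
      apply this
      have h5 : 1 - t ^ (legA lam i j + 1).toNat = 0 := by simpa using hcon
      exact (sub_eq_zero.mp h5).symm
  · rw [Finset.prod_ne_zero_iff]
    intro i hi
    rw [Finset.prod_ne_zero_iff]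
    intro j hj
    rw [zero_pow (by omega : partAt lam i - j + 1 ≠ 0)]
    simpa using zpow_ne_zero (-legA lam i j) ht

lemma nekReg_zero_Q_ne (t Q : ℂ) (ht : t ≠ 0) (hQ : Q ≠ 0)
    (hQt : ∀ k : ℤ, Q * t ^ k ≠ 1) (lam mu : List ℕ) : nekReg 0 t Q lam mu ≠ 0 := by
  unfold nekReg
  apply mul_ne_zero
  · rw [Finset.prod_ne_zero_iff]
    intro i hi
    rw [Finset.prod_ne_zero_iff]
    intro j hj
    rw [Finset.mem_Icc] at hj
    rcases Nat.lt_or_ge j (partAt lam i) with h | h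
    · rw [zero_pow (by omega : partAt lam i - j ≠ 0)]
      norm_num
    · have h0 : partAt lam i - j = 0 := by omega
      rw [h0, pow_zero]
      intro hcon
      apply hQt (legA mu i j + 1)
      have h5 : 1 - Q * t ^ (legA mu i j + 1) = 0 := by simpa using hcon
      exact (sub_eq_zero.mp h5).symm
  · rw [Finset.prod_ne_zero_iff]
    intro i hi
    rw [Finset.prod_ne_zero_iff]
    intro j hj
    rw [zero_pow (by omega : partAt mu i - j + 1 ≠ 0)]
    simp only [zero_sub, neg_ne_zero]
    exact mul_ne_zero hQ (zpow_ne_zero _ ht)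

lemma sum_getD (L : List ℕ) : ∑ k ∈ Finset.range L.length, L.getD k 0 = L.sum := by
  induction L with
  | nil => simp
  | cons a l ih =>
    rw [List.length_cons, Finset.sum_range_succ']
    simp only [List.getD_cons_succ, List.getD_cons_zero, List.sum_cons]
    omega

lemma sum_partAt (L : List ℕ) : ∑ i ∈ Finset.Icc 1 L.length, partAt L i = L.sum := by
  rw [← sum_getD]
  refine Finset.sum_nbij' (fun i => i - 1) (fun k => k + 1) ?_ ?_ ?_ ?_ ?_
  · intro i hi; simp only [Finset.mem_Icc] at hi; simp only [Finset.mem_range]; omega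
  · intro k hk; simp only [Finset.mem_range] at hk; simp only [Finset.mem_Icc]; omega
  · intro i hi; simp only [Finset.mem_Icc] at hi; show i - 1 + 1 = i; omega
  · intro k hk; show k + 1 - 1 = k; omega
  · intro i hi; rfl

lemma inner_ge (a : ℕ) : a ≤ ∑ j ∈ Finset.Icc 1 a, (a - j + 1) := by
  calc a = ∑ _j ∈ Finset.Icc 1 a, 1 := by simp
  _ ≤ _ := Finset.sum_le_sum fun j _ => by omega

lemma inner_gt (a : ℕ) (ha : 2 ≤ a) : a < ∑ j ∈ Finset.Icc 1 a, (a - j + 1) := by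
  calc a = ∑ _j ∈ Finset.Icc 1 a, 1 := by simp
  _ < _ := by
    apply Finset.sum_lt_sum (fun j _ => by omega)
    exact ⟨1, Finset.mem_Icc.mpr ⟨le_refl 1, by omega⟩, by omega⟩

lemma sum_le_n2 (L : List ℕ) : L.sum ≤ n2 L := by
  rw [← sum_partAt]
  exact Finset.sum_le_sum fun i _ => inner_ge _

lemma sum_lt_n2 (L : List ℕ) (hmem : ∃ x ∈ L, 2 ≤ x) : L.sum < n2 L := by
  rw [← sum_partAt]
  obtain ⟨x, hx, hx2⟩ := hmem
  rw [List.mem_iff_getElem] at hx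
  obtain ⟨a, ha, rfl⟩ := hx
  apply Finset.sum_lt_sum (fun i _ => inner_ge _)
  refine ⟨a + 1, Finset.mem_Icc.mpr ⟨by omega, by omega⟩, ?_⟩
  have hpa : partAt L (a + 1) = L[a] := by
    show L.getD (a + 1 - 1) 0 = L[a]
    have h7 : a + 1 - 1 = a := rfl
    rw [h7, List.getD_eq_getElem L 0 ha]
  rw [hpa]
  exact inner_gt _ hx2

lemma n2_replicate (n : ℕ) : n2 (List.replicate n (1:ℕ)) = n := by
  unfold n2
  rw [List.length_replicate]
  rw [Finset.sum_congr rfl (fun i hi => by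
    rw [partAt_replicate n i hi, Finset.Icc_self, Finset.sum_singleton])]
  simp

def colP (k : ℕ) : Nat.Partition k where
  parts := Multiset.replicate k 1
  parts_pos := fun h => by
    have := Multiset.eq_of_mem_replicate h; omega
  parts_sum := by simp

lemma plist_colP (k : ℕ) : plist (colP k) = List.replicate k 1 := by
  unfold plist
  have h1 : (colP k).parts.sort (· ≤ ·) = List.replicate k 1 := by
    refine (fun hp h1 h2 => List.Perm.eq_of_pairwise' (r := (· ≤ ·)) (l₂ := List.replicate k 1) h1 h2 hp) ?_ ?_ ?_
    · rw [← Multiset.coe_eq_coe, Multiset.sort_eq]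
      rw [Multiset.coe_replicate]
      rfl
    · exact Multiset.pairwise_sort _ _
    · exact List.pairwise_replicate.mpr (Or.inr (le_refl 1))
  rw [h1, List.reverse_replicate]

lemma plist_sum {k : ℕ} (P : Nat.Partition k) : (plist P).sum = k := by
  unfold plist
  rw [List.sum_reverse]
  have : ((P.parts.sort (· ≤ ·) : List ℕ) : Multiset ℕ).sum = (P.parts.sort (· ≤ ·)).sum := rfl
  rw [← this, Multiset.sort_eq, P.parts_sum]

lemma plist_mem {k : ℕ} (P : Nat.Partition k) (x : ℕ) : x ∈ plist P ↔ x ∈ P.parts := by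
  unfold plist
  rw [List.mem_reverse, Multiset.mem_sort]

lemma plist_sorted {k : ℕ} (P : Nat.Partition k) : List.Pairwise (· ≥ ·) (plist P) := by
  unfold plist
  rw [List.pairwise_reverse]
  exact Multiset.pairwise_sort P.parts (· ≤ ·)

lemma eq_colP {k : ℕ} (P : Nat.Partition k) (h : ∀ x ∈ plist P, x = 1) : P = colP k := by
  have hparts : ∀ x ∈ P.parts, x = 1 := fun x hx => h x ((plist_mem P x).mpr hx)
  have hcard : Multiset.card P.parts = k := by
    have h2 := P.parts_sum
    rw [Multiset.eq_replicate_card.mpr hparts] at h2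
    simpa using h2
  apply Nat.Partition.ext
  rw [Multiset.eq_replicate_card.mpr hparts, hcard]
  rfl

lemma term_tendsto (d : ℕ) (t Q : ℂ) (lam mu : List ℕ)
    (hR : nekReg 0 t 1 lam lam * nekReg 0 t Q lam mu * nekReg 0 t 1 mu mu *
      nekReg 0 t Q⁻¹ mu lam ≠ 0)
    (hK : 2 * d ≤ 2 * n2 lam + 2 * n2 mu) :
    Tendsto (fun q : ℂ => (t / q) ^ (2 * d) /
        (nekrasov q t 1 lam lam * nekrasov q t Q lam mu * nekrasov q t 1 mu mu *
          nekrasov q t Q⁻¹ mu lam)) (𝓝[≠] 0)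
      (𝓝 (t ^ (2 * d) * (0:ℂ) ^ (2 * n2 lam + 2 * n2 mu - 2 * d) /
        (nekReg 0 t 1 lam lam * nekReg 0 t Q lam mu * nekReg 0 t 1 mu mu *
          nekReg 0 t Q⁻¹ mu lam))) := by
  set K := 2 * n2 lam + 2 * n2 mu with hKdef
  set R : ℂ → ℂ := fun q => nekReg q t 1 lam lam * nekReg q t Q lam mu *
    nekReg q t 1 mu mu * nekReg q t Q⁻¹ mu lam with hRdef
  have hRc : Continuous R := by
    exact (((continuous_nekReg t 1 lam lam).mul (continuous_nekReg t Q lam mu)).mul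
      (continuous_nekReg t 1 mu mu)).mul (continuous_nekReg t Q⁻¹ mu lam)
  have h2 : Tendsto (fun q : ℂ => t ^ (2 * d) * q ^ (K - 2 * d) / R q) (𝓝[≠] 0)
      (𝓝 (t ^ (2 * d) * (0:ℂ) ^ (K - 2 * d) / R 0)) := by
    apply Tendsto.mono_left _ nhdsWithin_le_nhds
    exact Tendsto.div ((continuous_const.mul (continuous_pow _)).tendsto 0) (hRc.tendsto 0) hR
  refine Tendsto.congr' (Filter.eventuallyEq_of_mem self_mem_nhdsWithin fun q hq => ?_) h2
  have hq : (q : ℂ) ≠ 0 := hq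
  show t ^ (2 * d) * q ^ (K - 2 * d) / R q = _
  rw [nekrasov_eq_nekReg q t 1 hq, nekrasov_eq_nekReg q t Q hq, nekrasov_eq_nekReg q t 1 hq,
    nekrasov_eq_nekReg q t Q⁻¹ hq]
  have hden : (q ^ n2 lam)⁻¹ * nekReg q t 1 lam lam * ((q ^ n2 mu)⁻¹ * nekReg q t Q lam mu) *
      ((q ^ n2 mu)⁻¹ * nekReg q t 1 mu mu) * ((q ^ n2 lam)⁻¹ * nekReg q t Q⁻¹ mu lam) =
      (q ^ K)⁻¹ * R q := by
    rw [hKdef, show 2 * n2 lam + 2 * n2 mu = n2 lam + n2 mu + n2 mu + n2 lam from by ring,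
      pow_add, pow_add, pow_add, mul_inv, mul_inv, mul_inv, hRdef]
    ring
  rw [hden, inv_mul_eq_div, div_div_eq_mul_div]
  congr 1
  obtain ⟨e, he⟩ : ∃ e, K = 2 * d + e := ⟨K - 2 * d, by omega⟩
  have he2 : K - 2 * d = e := by omega
  rw [he2, he, pow_add, div_pow]
  field_simp

/-- As `q → 0` (through complex values `q ≠ 0`), the degree-`d` piece of the 5D pure gauge
Nekrasov partition function (with renormalization `Λ̃² = Λ²(q/t)^{1/2}`, i.e. weight
`(t/q)^{2d}`), summed over pairs of partitions `(λ, μ)` with `|λ| + |μ| = d`, tends to the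
degree-`d` piece of the crystallized partition function. -/
theorem nekrasov_pure_crystal_limit (d : ℕ) (t Q : ℂ) (ht0 : t ≠ 0) (hQ0 : Q ≠ 0)
    (htru : ∀ n : ℕ, 0 < n → t ^ n ≠ 1) (hQt : ∀ k : ℤ, Q ≠ t ^ k) :
    Tendsto (fun q : ℂ =>
        ∑ p ∈ Finset.HasAntidiagonal.antidiagonal d, ∑ lam : Nat.Partition p.1, ∑ mu : Nat.Partition p.2,
          (t / q) ^ (2 * d) /
            (nekrasov q t 1 (plist lam) (plist lam) * nekrasov q t Q (plist lam) (plist mu) *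
              nekrasov q t 1 (plist mu) (plist mu) * nekrasov q t Q⁻¹ (plist mu) (plist lam)))
      (𝓝[≠] 0)
      (𝓝 (∑ p ∈ Finset.HasAntidiagonal.antidiagonal d,
        1 / ((∏ s ∈ Finset.Icc 1 p.1,
                ((1 - t ^ (-(s : ℤ))) * (1 - Q⁻¹ * t ^ ((p.1 : ℤ) - (p.2 : ℤ) - (s : ℤ))))) *
              ∏ s ∈ Finset.Icc 1 p.2,
                ((1 - t ^ (-(s : ℤ))) * (1 - Q * t ^ ((p.2 : ℤ) - (p.1 : ℤ) - (s : ℤ))))))) := by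
  have hQt' : ∀ k : ℤ, Q * t ^ k ≠ 1 := by
    intro k hcon
    apply hQt (-k)
    rw [zpow_neg]
    exact eq_inv_of_mul_eq_one_left hcon
  have hQt'' : ∀ k : ℤ, Q⁻¹ * t ^ k ≠ 1 := by
    intro k hcon
    apply hQt k
    have h5 := eq_inv_of_mul_eq_one_left hcon
    exact inv_injective h5
  refine tendsto_finset_sum _ fun p hp => ?_
  have hd : p.1 + p.2 = d := Finset.HasAntidiagonal.mem_antidiagonal.mp hp
  have hR : ∀ (lam : Nat.Partition p.1) (mu : Nat.Partition p.2),
      nekReg 0 t 1 (plist lam) (plist lam) * nekReg 0 t Q (plist lam) (plist mu) *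
        nekReg 0 t 1 (plist mu) (plist mu) * nekReg 0 t Q⁻¹ (plist mu) (plist lam) ≠ 0 :=
    fun lam mu => mul_ne_zero (mul_ne_zero (mul_ne_zero
      (nekReg_zero_self_ne t ht0 htru _ (plist_sorted lam))
      (nekReg_zero_Q_ne t Q ht0 hQ0 hQt' _ _))
      (nekReg_zero_self_ne t ht0 htru _ (plist_sorted mu)))
      (nekReg_zero_Q_ne t Q⁻¹ ht0 (inv_ne_zero hQ0) hQt'' _ _)
  have hn2lam : ∀ lam : Nat.Partition p.1, p.1 ≤ n2 (plist lam) := by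
    intro lam
    have := sum_le_n2 (plist lam)
    rwa [plist_sum] at this
  have hn2mu : ∀ mu : Nat.Partition p.2, p.2 ≤ n2 (plist mu) := by
    intro mu
    have := sum_le_n2 (plist mu)
    rwa [plist_sum] at this
  have hlim : Tendsto (fun q : ℂ =>
      ∑ lam : Nat.Partition p.1, ∑ mu : Nat.Partition p.2,
        (t / q) ^ (2 * d) /
          (nekrasov q t 1 (plist lam) (plist lam) * nekrasov q t Q (plist lam) (plist mu) *
            nekrasov q t 1 (plist mu) (plist mu) * nekrasov q t Q⁻¹ (plist mu) (plist lam)))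
      (𝓝[≠] 0)
      (𝓝 (∑ lam : Nat.Partition p.1, ∑ mu : Nat.Partition p.2,
        t ^ (2 * d) * (0:ℂ) ^ (2 * n2 (plist lam) + 2 * n2 (plist mu) - 2 * d) /
          (nekReg 0 t 1 (plist lam) (plist lam) * nekReg 0 t Q (plist lam) (plist mu) *
            nekReg 0 t 1 (plist mu) (plist mu) * nekReg 0 t Q⁻¹ (plist mu) (plist lam)))) :=
    tendsto_finset_sum _ fun lam _ => tendsto_finset_sum _ fun mu _ =>
      term_tendsto d t Q (plist lam) (plist mu) (hR lam mu)
        (by have := hn2lam lam; have := hn2mu mu; omega)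
  suffices hS : (∑ lam : Nat.Partition p.1, ∑ mu : Nat.Partition p.2,
      t ^ (2 * d) * (0:ℂ) ^ (2 * n2 (plist lam) + 2 * n2 (plist mu) - 2 * d) /
        (nekReg 0 t 1 (plist lam) (plist lam) * nekReg 0 t Q (plist lam) (plist mu) *
          nekReg 0 t 1 (plist mu) (plist mu) * nekReg 0 t Q⁻¹ (plist mu) (plist lam))) =
      1 / ((∏ s ∈ Finset.Icc 1 p.1,
              ((1 - t ^ (-(s : ℤ))) * (1 - Q⁻¹ * t ^ ((p.1 : ℤ) - (p.2 : ℤ) - (s : ℤ))))) *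
            ∏ s ∈ Finset.Icc 1 p.2,
              ((1 - t ^ (-(s : ℤ))) * (1 - Q * t ^ ((p.2 : ℤ) - (p.1 : ℤ) - (s : ℤ))))) by
    rwa [hS] at hlim
  have hstrict : ∀ {k : ℕ} (P : Nat.Partition k), P ≠ colP k → k < n2 (plist P) := by
    intro k P hne
    have hex : ∃ x ∈ plist P, 2 ≤ x := by
      by_contra hno
      push_neg at hno
      apply hne
      apply eq_colP
      intro x hx
      have hpos := P.parts_pos ((plist_mem P x).mp hx)
      have := hno x hx
      omega
    have := sum_lt_n2 (plist P) hex
    rwa [plist_sum] at this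
  have hcongr : ∀ (lam : Nat.Partition p.1) (mu : Nat.Partition p.2),
      t ^ (2 * d) * (0:ℂ) ^ (2 * n2 (plist lam) + 2 * n2 (plist mu) - 2 * d) /
        (nekReg 0 t 1 (plist lam) (plist lam) * nekReg 0 t Q (plist lam) (plist mu) *
          nekReg 0 t 1 (plist mu) (plist mu) * nekReg 0 t Q⁻¹ (plist mu) (plist lam)) =
      if lam = colP p.1 ∧ mu = colP p.2 then
        (1 / ((∏ s ∈ Finset.Icc 1 p.1,
              ((1 - t ^ (-(s : ℤ))) * (1 - Q⁻¹ * t ^ ((p.1 : ℤ) - (p.2 : ℤ) - (s : ℤ))))) *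
            ∏ s ∈ Finset.Icc 1 p.2,
              ((1 - t ^ (-(s : ℤ))) * (1 - Q * t ^ ((p.2 : ℤ) - (p.1 : ℤ) - (s : ℤ))))))
      else 0 := by
    intro lam mu
    by_cases h1 : lam = colP p.1
    · by_cases h2 : mu = colP p.2
      · rw [if_pos ⟨h1, h2⟩, h1, h2, plist_colP, plist_colP, n2_replicate, n2_replicate,
          column_R0 t Q ht0 hQ0 p.1 p.2,
          show 2 * p.1 + 2 * p.2 - 2 * d = 0 from by omega, pow_zero, mul_one,
          show 2 * (p.1 + p.2) = 2 * d from by omega,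
          div_mul_eq_div_div, div_self (pow_ne_zero _ ht0)]
      · rw [if_neg (by tauto)]
        have hlt := hstrict mu h2
        have hge := hn2lam lam
        rw [zero_pow (by omega : 2 * n2 (plist lam) + 2 * n2 (plist mu) - 2 * d ≠ 0),
          mul_zero, zero_div]
    · rw [if_neg (by tauto)]
      have hlt := hstrict lam h1
      have hge := hn2mu mu
      rw [zero_pow (by omega : 2 * n2 (plist lam) + 2 * n2 (plist mu) - 2 * d ≠ 0),
        mul_zero, zero_div]
  rw [Finset.sum_congr rfl fun lam _ => Finset.sum_congr rfl fun mu _ => hcongr lam mu]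
  simp [ite_and, Finset.sum_ite_eq']
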